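/- In the simplicial setup, if the affine semigroup ring K[B] is Buchsbaum (in particular, if it is Cohen–Macaulay), then the initial ideal in_≺(ker π) of the simplicial toric ideal with respect to the graded reverse lexicographic order is generated by elements of degree at most r(K[B]) + 1. -/

import Mathlib

namespace SimplicialToric

/-- `eVec d α i` is `α` times the `i`-th standard basis vector of `ℕ^d`. -/
def eVec (d α : ℕ) (i : Fin d) : Fin d → ℕ := fun j => if j = i then α else 0

/-- The Hilbert basis of a submonoid `B ⊆ ℕ^d`: the set of irreducible elements
(in `ℕ^d` the only unit is `0`). -/
def Hilb {d : ℕ} (B : AddSubmonoid (Fin d → ℕ)) : Set (Fin d → ℕ) :=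
  {b | b ∈ B ∧ b ≠ 0 ∧ ∀ x ∈ B, ∀ y ∈ B, b = x + y → x = 0 ∨ y = 0}

/-- The submonoid `A = Σᵢ ℤ≥0·eᵢ = αℤ≥0^d`. -/
def Amon (d α : ℕ) : AddSubmonoid (Fin d → ℕ) :=
  AddSubmonoid.closure (Set.range (eVec d α))

/-- `B_A = {x ∈ B : x − a ∉ B for every a ∈ A \ {0}}`. -/
def BA {d : ℕ} (B : AddSubmonoid (Fin d → ℕ)) (α : ℕ) : Set (Fin d → ℕ) :=
  {x | x ∈ B ∧ ∀ z ∈ Amon d α, z ≠ 0 → ∀ y ∈ B, x ≠ y + z}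

/-- The generators `a₁,…,a_c,e₁,…,e_d` of `B`, indexed by the variables of
`S = K[x₁,…,x_c,y₁,…,y_d]`; variable `Fin.castAdd d i` is `xᵢ`, variable
`Fin.natAdd c j` is `yⱼ`. -/
def gens (c d α : ℕ) (a : Fin c → Fin d → ℕ) : Fin (c + d) → Fin d → ℕ :=
  Fin.addCases a (eVec d α)

/-- The element of `B` represented by the monomial with exponent vector `σ`:
`π(x^μ y^ν) = t^(valE σ)`. -/
def valE (c d α : ℕ) (a : Fin c → Fin d → ℕ) (σ : Fin (c + d) →₀ ℕ) : Fin d → ℕ :=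
  ∑ v : Fin (c + d), σ v • gens c d α a v

/-- total degree of a monomial (exponent vector). -/
def degE {N : ℕ} (σ : Fin N →₀ ℕ) : ℕ := ∑ v, σ v

/-- the graded reverse lexicographic order: `grevlex σ τ` means `σ ≺ τ`,
i.e. `deg σ < deg τ`, or degrees agree and the last nonzero entry of `τ − σ`
is negative. -/
def grevlex {N : ℕ} (σ τ : Fin N →₀ ℕ) : Prop :=
  degE σ < degE τ ∨ (degE σ = degE τ ∧ ∃ k, τ k < σ k ∧ ∀ l, k < l → σ l = τ l)

/-- `x ∼ y` iff `x − y ∈ gp(A) = αℤ^d`. -/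
def Rel {d : ℕ} (α : ℕ) (x y : Fin d → ℕ) : Prop :=
  ∀ j, (α : ℤ) ∣ (x j : ℤ) - (y j : ℤ)

/-- `Γ` is an equivalence class of `B_A` modulo `αℤ^d`. -/
def IsClass {d : ℕ} (B : AddSubmonoid (Fin d → ℕ)) (α : ℕ) (Γ : Set (Fin d → ℕ)) : Prop :=
  ∃ x ∈ BA B α, Γ = {y | y ∈ BA B α ∧ Rel α x y}

/-- the total order on an equivalence class of `B_A`: `b ≺ c` iff the last
nonzero entry of `b − c` is negative. -/
def ltCls {d : ℕ} (x y : Fin d → ℕ) : Prop :=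
  ∃ k, x k < y k ∧ ∀ l, k < l → x l = y l

/-- `joinSub x y = x∨y − y`, where `x∨y` is the componentwise maximum. -/
def joinSub {d : ℕ} (x y : Fin d → ℕ) : Fin d → ℕ := fun j => max (x j) (y j) - y j

/-- the monomial with exponents `σ` lies in `T = K[y₁,…,y_d]`. -/
def yOnly (c d : ℕ) (σ : Fin (c + d) →₀ ℕ) : Prop := ∀ i : Fin c, σ (Fin.castAdd d i) = 0

/-- the monomial with exponents `σ` involves only the `x`-variables. -/
def xOnly (c d : ℕ) (σ : Fin (c + d) →₀ ℕ) : Prop := ∀ j : Fin d, σ (Fin.natAdd c j) = 0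

/-- the set `N₁`, for a given choice `m` of the minimal monomials `m_b`. -/
def N1set (c d α : ℕ) (a : Fin c → Fin d → ℕ) (B : AddSubmonoid (Fin d → ℕ))
    (m : (Fin d → ℕ) → (Fin (c + d) →₀ ℕ)) : Set (Fin (c + d) →₀ ℕ) :=
  {n | ∃ (i : Fin c) (b : Fin d → ℕ), b ∈ BA B α ∧
    n = Finsupp.single (Fin.castAdd d i) 1 + m b ∧ n ≠ m (a i + b)}

/-- the set `N₂ = ∪_Γ N_Γ`, where `N_Γ = {n(bᵢ,bⱼ) = m_{bⱼ}·m_{bᵢ∨bⱼ−bⱼ} : bᵢ ≺ bⱼ in Γ}`. -/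
def N2set {d : ℕ} (c α : ℕ) (B : AddSubmonoid (Fin d → ℕ))
    (m : (Fin d → ℕ) → (Fin (c + d) →₀ ℕ)) : Set (Fin (c + d) →₀ ℕ) :=
  {n | ∃ Γ, IsClass B α Γ ∧ ∃ bi ∈ Γ, ∃ bj ∈ Γ, ltCls bi bj ∧ n = m bj + m (joinSub bi bj)}

/-- `σ` is the exponent vector of the initial (i.e. `≺`-largest) term of `f`. -/
def IsLeadMon {N : ℕ} {K : Type*} [Field K] (f : MvPolynomial (Fin N) K)
    (σ : Fin N →₀ ℕ) : Prop :=
  σ ∈ f.support ∧ ∀ τ ∈ f.support, τ = σ ∨ grevlex τ σ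

/-- the initial ideal of `I` with respect to the graded reverse lexicographic order. -/
noncomputable def initialIdeal {N : ℕ} {K : Type*} [Field K] (I : Ideal (MvPolynomial (Fin N) K)) :
    Ideal (MvPolynomial (Fin N) K) :=
  Ideal.span {g | ∃ f ∈ I, ∃ σ, IsLeadMon f σ ∧ g = MvPolynomial.monomial σ (1 : K)}

end SimplicialToric

namespace SimplicialToric

variable {c d α : ℕ} {a : Fin c → Fin d → ℕ} {B : AddSubmonoid (Fin d → ℕ)}

theorem degE_add {N : ℕ} (σ τ : Fin N →₀ ℕ) : degE (σ + τ) = degE σ + degE τ := by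
  simp [degE, Finsupp.add_apply, Finset.sum_add_distrib]

theorem degE_eq_zero {N : ℕ} {σ : Fin N →₀ ℕ} (h : degE σ = 0) : σ = 0 := by
  have := (Finset.sum_eq_zero_iff (s := Finset.univ) (f := fun v => σ v)).1 h
  ext v; exact this v (Finset.mem_univ v)

theorem valE_add (σ τ : Fin (c + d) →₀ ℕ) :
    valE c d α a (σ + τ) = valE c d α a σ + valE c d α a τ := by
  simp [valE, Finsupp.add_apply, add_smul, Finset.sum_add_distrib]

theorem valE_single (v : Fin (c + d)) (k : ℕ) :
    valE c d α a (Finsupp.single v k) = k • gens c d α a v := by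
  rw [valE]
  rw [Finset.sum_eq_single v]
  · simp
  · intro w _ hw; simp [Finsupp.single_apply, Ne.symm hw]
  · intro h; exact absurd (Finset.mem_univ v) h

theorem valE_zero : valE c d α a 0 = 0 := by simp [valE]

theorem gens_sum (hdeg : ∀ i, ∑ j, a i j = α) (v : Fin (c + d)) :
    ∑ j, gens c d α a v j = α := by
  induction v using Fin.addCases with
  | left i => simpa [gens] using hdeg i
  | right j =>
    simp only [gens, Fin.addCases_right, eVec]
    rw [Finset.sum_ite_eq' Finset.univ j (fun _ => α)]
    simp

theorem sum_valE (hdeg : ∀ i, ∑ j, a i j = α) (σ : Fin (c + d) →₀ ℕ) :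
    ∑ j, valE c d α a σ j = α * degE σ := by
  have : ∀ j, valE c d α a σ j = ∑ v : Fin (c + d), σ v * gens c d α a v j := by
    intro j; rw [valE]; rw [Finset.sum_apply]; rfl
  calc ∑ j, valE c d α a σ j = ∑ j, ∑ v : Fin (c + d), σ v * gens c d α a v j := by
        exact Finset.sum_congr rfl fun j _ => this j
    _ = ∑ v : Fin (c + d), ∑ j, σ v * gens c d α a v j := Finset.sum_comm
    _ = ∑ v : Fin (c + d), σ v * α := by
        refine Finset.sum_congr rfl fun v _ => ?_
        rw [← Finset.mul_sum, gens_sum hdeg]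
    _ = α * degE σ := by rw [degE, Finset.mul_sum]; exact Finset.sum_congr rfl fun v _ => mul_comm _ _

theorem gens_mem (hBgen : B = AddSubmonoid.closure (Set.range a ∪ Set.range (eVec d α)))
    (v : Fin (c + d)) : gens c d α a v ∈ B := by
  subst hBgen
  induction v using Fin.addCases with
  | left i =>
    have : gens c d α a (Fin.castAdd d i) = a i := by simp [gens]
    rw [this]; exact AddSubmonoid.subset_closure (Or.inl ⟨i, rfl⟩)
  | right j =>
    have : gens c d α a (Fin.natAdd c j) = eVec d α j := by simp [gens]
    rw [this]; exact AddSubmonoid.subset_closure (Or.inr ⟨j, rfl⟩)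

theorem valE_mem (hBgen : B = AddSubmonoid.closure (Set.range a ∪ Set.range (eVec d α)))
    (σ : Fin (c + d) →₀ ℕ) : valE c d α a σ ∈ B := by
  rw [valE]
  exact sum_mem fun v _ => AddSubmonoid.nsmul_mem B (gens_mem hBgen v) _

theorem grevlex_asymm {N : ℕ} {σ τ : Fin N →₀ ℕ} (h1 : grevlex σ τ) (h2 : grevlex τ σ) :
    False := by
  rcases h1 with h1 | ⟨hd1, k1, hk1, hl1⟩
  · rcases h2 with h2 | ⟨hd2, _⟩ <;> omega
  rcases h2 with h2 | ⟨hd2, k2, hk2, hl2⟩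
  · omega
  rcases lt_trichotomy k1 k2 with h | h | h
  · have := hl1 k2 h; omega
  · subst h; omega
  · have := hl2 k1 h; omega

theorem grevlex_add {N : ℕ} {σ τ : Fin N →₀ ℕ} (ρ : Fin N →₀ ℕ) (h : grevlex σ τ) :
    grevlex (σ + ρ) (τ + ρ) := by
  rcases h with h | ⟨hd, k, hk, hl⟩
  · left; rw [degE_add, degE_add]; omega
  · right
    refine ⟨by rw [degE_add, degE_add]; omega, k, ?_, ?_⟩
    · simp only [Finsupp.add_apply]; omega
    · intro l hll; simp only [Finsupp.add_apply]; rw [hl l hll]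

theorem mem_Amon_iff (hα : 0 < α) {z : Fin d → ℕ} :
    z ∈ Amon d α ↔ ∀ j, α ∣ z j := by
  constructor
  · intro hz
    induction hz using AddSubmonoid.closure_induction with
    | mem x hx =>
      obtain ⟨i, rfl⟩ := hx
      intro j; by_cases h : j = i <;> simp [eVec, h]
    | zero => simp
    | add x y _ _ hx hy => intro j; exact dvd_add (hx j) (hy j)
  · intro hz
    have hzeq : z = ∑ j : Fin d, (z j / α) • eVec d α j := by
      funext j'
      rw [Finset.sum_apply]
      rw [Finset.sum_eq_single j']
      · simp [eVec, Nat.div_mul_cancel (hz j')]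
      · intro w _ hw; simp [eVec, Ne.symm hw]
      · intro h; exact absurd (Finset.mem_univ j') h
    rw [hzeq]
    exact sum_mem fun j _ =>
      AddSubmonoid.nsmul_mem _ (AddSubmonoid.subset_closure (Set.mem_range_self j)) _

theorem Amon_le (hBgen : B = AddSubmonoid.closure (Set.range a ∪ Set.range (eVec d α))) :
    Amon d α ≤ B := by
  subst hBgen
  exact AddSubmonoid.closure_le.2 fun x hx =>
    AddSubmonoid.subset_closure (Or.inr hx)

theorem eVec_ne_zero (hα : 0 < α) (j : Fin d) : eVec d α j ≠ 0 := by
  intro h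
  have := congrFun h j
  simp [eVec] at this
  omega

theorem eVec_mem_Amon (j : Fin d) : eVec d α j ∈ Amon d α :=
  AddSubmonoid.subset_closure ⟨j, rfl⟩

theorem exists_decomp (hα : 0 < α)
    (b : Fin d → ℕ) (hb : b ∈ B) :
    ∃ b₀ z, b₀ ∈ BA B α ∧ (∀ j, α ∣ z j) ∧ b = b₀ + z := by
  suffices H : ∀ N b, b ∈ B → (∑ j, b j) ≤ N →
      ∃ b₀ z, b₀ ∈ BA B α ∧ (∀ j, α ∣ z j) ∧ b = b₀ + z from
    H (∑ j, b j) b hb le_rfl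
  intro N
  induction N with
  | zero =>
    intro b hb hN
    refine ⟨b, 0, ⟨hb, ?_⟩, fun j => dvd_zero α, (add_zero b).symm⟩
    intro z hz hz0 y hy heq
    obtain ⟨j, hj⟩ := Function.ne_iff.mp hz0
    have hble : b j = 0 := by
      have : ∑ jj, b jj = 0 := Nat.le_zero.mp hN
      have := (Finset.sum_eq_zero_iff (s := Finset.univ) (f := fun jj => b jj)).1 this
      exact this j (Finset.mem_univ j)
    have : b j = y j + z j := congrFun heq j
    simp only [Pi.zero_apply] at hj
    omega
  | succ N IH =>
    intro b hb hN
    by_cases hBA : b ∈ BA B α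
    · exact ⟨b, 0, hBA, fun j => dvd_zero α, (add_zero b).symm⟩
    · have hBA' : ¬(b ∈ B ∧ ∀ z ∈ Amon d α, z ≠ 0 → ∀ y ∈ B, b ≠ y + z) := hBA
      push_neg at hBA'
      obtain ⟨z, hz, hz0, y, hy, heq⟩ := hBA' hb
      obtain ⟨j0, hj0⟩ := Function.ne_iff.mp hz0
      simp only [Pi.zero_apply] at hj0
      have hsum : ∑ j, b j = (∑ j, y j) + ∑ j, z j := by
        rw [← Finset.sum_add_distrib]
        exact Finset.sum_congr rfl fun j _ => congrFun heq j
      have hzpos : 0 < ∑ j, z j :=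
        lt_of_lt_of_le (Nat.pos_of_ne_zero hj0)
          (Finset.single_le_sum (f := fun j => z j) (fun _ _ => Nat.zero_le _)
            (Finset.mem_univ j0))
      obtain ⟨b₀, z', hb₀, hz', heq'⟩ := IH y hy (by omega)
      refine ⟨b₀, z' + z, hb₀, fun j => dvd_add (hz' j)
        ((mem_Amon_iff hα).1 hz j), ?_⟩
      rw [heq, heq', add_assoc]

theorem sub_single_add {N : ℕ} (σ : Fin N →₀ ℕ) (v : Fin N) (h : σ v ≠ 0) :
    σ = (σ - Finsupp.single v 1) + Finsupp.single v 1 := by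
  ext w
  simp only [Finsupp.add_apply, Finsupp.coe_tsub, Pi.sub_apply, Finsupp.single_apply]
  by_cases hw : v = w
  · subst hw; simp; omega
  · simp [hw]

theorem sub_single_le {N : ℕ} (σ : Fin N →₀ ℕ) (v : Fin N) (w : Fin N) :
    (σ - (Finsupp.single v 1 : Fin N →₀ ℕ)) w ≤ σ w := by
  simp only [Finsupp.coe_tsub, Pi.sub_apply]
  omega

theorem above_natAdd {l : Fin d} {idx : Fin (c + d)} (h : Fin.natAdd c l < idx) :
    ∃ l' : Fin d, l < l' ∧ idx = Fin.natAdd c l' := by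
  have hlt : c + (l : ℕ) < (idx : ℕ) := h
  have hidx : (idx : ℕ) < c + d := idx.isLt
  refine ⟨⟨(idx : ℕ) - c, by omega⟩, by simp [Fin.lt_def]; omega, ?_⟩
  apply Fin.ext
  simp [Fin.natAdd]
  omega

section WithM

variable (m : (Fin d → ℕ) → (Fin (c + d) →₀ ℕ))

theorem gens_natAdd (j : Fin d) : gens c d α a (Fin.natAdd c j) = eVec d α j := by
  simp [gens]

theorem valE_y_single (j : Fin d) :
    valE c d α a (Finsupp.single (Fin.natAdd c j) 1) = eVec d α j := by
  rw [valE_single, gens_natAdd, one_smul]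

/-- the minimal monomial of an element of `B_A` is pure in the `x`-variables. -/
theorem BA_pure (hα : 0 < α)
    (hBgen : B = AddSubmonoid.closure (Set.range a ∪ Set.range (eVec d α)))
    (hmval : ∀ b ∈ B, valE c d α a (m b) = b)
    {b : Fin d → ℕ} (hb : b ∈ BA B α) (j : Fin d) : m b (Fin.natAdd c j) = 0 := by
  by_contra h
  have hsplit := sub_single_add (m b) (Fin.natAdd c j) h
  have hval : valE c d α a (m b - Finsupp.single (Fin.natAdd c j) 1) + eVec d α j = b := by
    have := hmval b hb.1
    rw [hsplit, valE_add, valE_y_single] at this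
    exact this
  exact hb.2 (eVec d α j) (eVec_mem_Amon j) (eVec_ne_zero hα j) _
    (valE_mem hBgen _) hval.symm

/-- a standard monomial pure in the `x`-variables has value in `B_A`. -/
theorem pureX_std_BA (hα : 0 < α) (hdeg : ∀ i, ∑ j, a i j = α)
    (hBgen : B = AddSubmonoid.closure (Set.range a ∪ Set.range (eVec d α)))
    (hmval : ∀ b ∈ B, valE c d α a (m b) = b)
    (hmmin : ∀ b ∈ B, ∀ σ, valE c d α a σ = b → m b = σ ∨ grevlex (m b) σ)
    (σ : Fin (c + d) →₀ ℕ) (hx : ∀ j, σ (Fin.natAdd c j) = 0)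
    (hstd : σ = m (valE c d α a σ)) : valE c d α a σ ∈ BA B α := by
  refine ⟨valE_mem hBgen σ, ?_⟩
  intro z hz hz0 y hy heq
  -- find k with z k ≥ α
  obtain ⟨k, hk⟩ := Function.ne_iff.mp hz0
  simp only [Pi.zero_apply] at hk
  have hzk : α ∣ z k := (mem_Amon_iff hα).1 hz k
  have hzkα : α ≤ z k := Nat.le_of_dvd (Nat.pos_of_ne_zero hk) hzk
  set z' : Fin d → ℕ := fun j => z j - eVec d α k j with hz'def
  have hz'dvd : ∀ j, α ∣ z' j := by
    intro j
    by_cases hj : j = k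
    · subst hj; simp only [hz'def, eVec]; simp; exact Or.inl hzk
    · simp only [hz'def, eVec, if_neg hj, Nat.sub_zero]
      exact (mem_Amon_iff hα).1 hz j
  have hz'A : z' ∈ Amon d α := (mem_Amon_iff hα).2 hz'dvd
  set w : Fin d → ℕ := y + z' with hwdef
  have hwB : w ∈ B := B.add_mem hy (Amon_le hBgen hz'A)
  have hwe : valE c d α a σ = w + eVec d α k := by
    funext j
    have h1 : valE c d α a σ j = y j + z j := congrFun heq j
    have h2 : z j = z' j + eVec d α k j := by
      by_cases hj : j = k
      · subst hj; simp only [hz'def, eVec]; simp; omega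
      · simp [hz'def, eVec, hj]
    simp only [hwdef, Pi.add_apply]
    omega
  -- the competing monomial
  set τ : Fin (c + d) →₀ ℕ := m w + Finsupp.single (Fin.natAdd c k) 1 with hτdef
  have hτval : valE c d α a τ = valE c d α a σ := by
    rw [hτdef, valE_add, valE_y_single, hmval w hwB, hwe]
  have hτk : τ (Fin.natAdd c k) ≠ 0 := by
    simp [hτdef, Finsupp.add_apply, Finsupp.single_apply]
  -- the largest y-index of τ
  set J : Finset (Fin d) := Finset.univ.filter (fun j => τ (Fin.natAdd c j) ≠ 0) with hJdef
  have hJne : J.Nonempty := ⟨k, by simp [hJdef, hτk]⟩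
  set k' : Fin d := J.max' hJne with hk'def
  have hk'mem : τ (Fin.natAdd c k') ≠ 0 := by
    have := J.max'_mem hJne
    simp only [hJdef, Finset.mem_filter] at this
    exact this.2
  have hk'max : ∀ l, k' < l → τ (Fin.natAdd c l) = 0 := by
    intro l hl
    by_contra hne
    have : l ∈ J := by simp [hJdef, hne]
    have := J.le_max' l this
    exact absurd (lt_of_le_of_lt this hl) (lt_irrefl l)
  -- τ ≺ σ
  have hdegeq : degE τ = degE σ := by
    have h1 := sum_valE hdeg τ
    have h2 := sum_valE hdeg σ
    rw [hτval] at h1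
    exact Nat.eq_of_mul_eq_mul_left hα (h1.symm.trans h2)
  have hgl : grevlex τ σ := by
    right
    refine ⟨hdegeq, Fin.natAdd c k', by rw [hx k']; omega, ?_⟩
    intro l hl
    obtain ⟨l', hl', rfl⟩ := above_natAdd hl
    rw [hx l', hk'max l' hl']
  -- but σ is standard, contradiction
  rcases hmmin (valE c d α a σ) (valE_mem hBgen σ) τ hτval with h | h
  · rw [← hstd] at h
    apply hτk
    rw [← h, hx k]
  · rw [← hstd] at h
    exact grevlex_asymm h hgl

/-- Key lemma: adding a `y`-variable beyond all `y`-variables of a standard monomial,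
when no later `y` can be split off the value, again yields a standard monomial. -/
theorem lemB (hα : 0 < α) (hdeg : ∀ i, ∑ j, a i j = α)
    (hBgen : B = AddSubmonoid.closure (Set.range a ∪ Set.range (eVec d α)))
    (hmval : ∀ b ∈ B, valE c d α a (m b) = b)
    (hmmin : ∀ b ∈ B, ∀ σ, valE c d α a σ = b → m b = σ ∨ grevlex (m b) σ)
    (n' : Fin (c + d) →₀ ℕ) (hstd : n' = m (valE c d α a n')) (j : Fin d)
    (hy : ∀ l, j < l → n' (Fin.natAdd c l) = 0)
    (hno : ∀ l, j < l → ∀ w ∈ B,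
      valE c d α a (n' + Finsupp.single (Fin.natAdd c j) 1) ≠ w + eVec d α l) :
    m (valE c d α a (n' + Finsupp.single (Fin.natAdd c j) 1))
      = n' + Finsupp.single (Fin.natAdd c j) 1 := by
  set nb : Fin (c + d) →₀ ℕ := n' + Finsupp.single (Fin.natAdd c j) 1 with hnbdef
  set b : Fin d → ℕ := valE c d α a nb with hbdef
  have hbB : b ∈ B := valE_mem hBgen nb
  set ρ : Fin (c + d) →₀ ℕ := m b with hρdef
  have hρval : valE c d α a ρ = b := hmval b hbB
  -- Claim 1 : ρ has no y-variables beyond j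
  have claim1 : ∀ l, j < l → ρ (Fin.natAdd c l) = 0 := by
    intro l hl
    by_contra hne
    have hsplit := sub_single_add ρ (Fin.natAdd c l) hne
    have : valE c d α a (ρ - Finsupp.single (Fin.natAdd c l) 1) + eVec d α l = b := by
      have := hρval
      rw [hsplit, valE_add, valE_y_single] at this
      exact this
    exact hno l hl _ (valE_mem hBgen _) this.symm
  -- Claim 2 : ρ contains y_j
  have claim2 : ρ (Fin.natAdd c j) ≠ 0 := by
    intro h0
    rcases hmmin b hbB nb rfl with h | h
    · rw [← hρdef] at h
      rw [h] at h0
      simp [hnbdef, Finsupp.add_apply, Finsupp.single_apply] at h0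
    · rw [← hρdef] at h
      -- show grevlex nb ρ, contradiction
      have hdegeq : degE nb = degE ρ := by
        have h1 := sum_valE hdeg nb
        have h2 := sum_valE hdeg ρ
        rw [hρval] at h2
        exact Nat.eq_of_mul_eq_mul_left hα (h1.symm.trans h2)
      have : grevlex nb ρ := by
        right
        refine ⟨hdegeq, Fin.natAdd c j, ?_, ?_⟩
        · rw [h0]
          simp [hnbdef, Finsupp.add_apply, Finsupp.single_apply]
        · intro l hl
          obtain ⟨l', hl', rfl⟩ := above_natAdd hl
          rw [claim1 l' hl']
          simp [hnbdef, Finsupp.add_apply, Finsupp.single_apply, hy l' hl',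
            ne_of_lt hl]
      exact grevlex_asymm h this
  -- now peel off y_j from ρ
  have hsplit := sub_single_add ρ (Fin.natAdd c j) claim2
  set ρ' : Fin (c + d) →₀ ℕ := ρ - Finsupp.single (Fin.natAdd c j) 1 with hρ'def
  have hρ'val : valE c d α a ρ' = valE c d α a n' := by
    have h1 : valE c d α a ρ' + eVec d α j = b := by
      have := hρval
      rw [hsplit, valE_add, valE_y_single] at this
      exact this
    have h2 : valE c d α a n' + eVec d α j = b := by
      rw [hbdef, hnbdef, valE_add, valE_y_single]
    funext jj
    have := congrFun (h1.trans h2.symm) jj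
    simp only [Pi.add_apply] at this
    omega
  rcases hmmin (valE c d α a n') (valE_mem hBgen n') ρ' hρ'val with h | h
  · rw [← hstd] at h
    rw [hsplit, ← h]
  · rw [← hstd] at h
    have hgl : grevlex nb ρ := by
      have := grevlex_add (Finsupp.single (Fin.natAdd c j) 1) h
      rw [← hsplit] at this
      exact this
    rcases hmmin b hbB nb rfl with h2 | h2
    · exact h2
    · exact absurd hgl (fun hh => grevlex_asymm h2 hh)

/-- The Buchsbaum dichotomy for the class of an element of `B_A`. -/
theorem class_dichotomy (hα : 0 < α)
    (hBgen : B = AddSubmonoid.closure (Set.range a ∪ Set.range (eVec d α)))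
    (hBuch : ∀ Γ, IsClass B α Γ → ∀ h : Fin d → ℕ,
      (∀ j, IsLeast {v | ∃ b ∈ Γ, v = b j} (h j)) →
      (h ∈ Γ ∨ ((∀ b ∈ Γ, ∃ k : Fin d, b = fun j => h j + eVec d α k j) ∧
        (∀ k : Fin d, ∃ b ∈ Γ, b = fun j => h j + eVec d α k j) ∧
        ∀ hb ∈ Hilb B, h + hb ∈ B)))
    (u : Fin d → ℕ) (hu : u ∈ BA B α) :
    (∀ w ∈ BA B α, Rel α u w → w = u) ∨
      ∃ h : Fin d → ℕ,
        (∀ b' ∈ BA B α, Rel α u b' → ∃ k, b' = fun j => h j + eVec d α k j) ∧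
        (∀ k : Fin d, (fun j => h j + eVec d α k j) ∈ BA B α ∧
          Rel α u (fun j => h j + eVec d α k j)) := by
  classical
  set Γ : Set (Fin d → ℕ) := {y | y ∈ BA B α ∧ Rel α u y} with hΓdef
  have hΓclass : IsClass B α Γ := ⟨u, hu, rfl⟩
  have hrefl : Rel α u u := fun j => by simp
  have huΓ : u ∈ Γ := ⟨hu, hrefl⟩
  set h : Fin d → ℕ := fun j => sInf {v | ∃ b ∈ Γ, v = b j} with hhdef
  have hleast : ∀ j, IsLeast {v | ∃ b ∈ Γ, v = b j} (h j) := by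
    intro j
    constructor
    · exact Nat.sInf_mem ⟨u j, u, huΓ, rfl⟩
    · intro v hv; exact Nat.sInf_le hv
  have hlb : ∀ b' ∈ Γ, ∀ j, h j ≤ b' j := fun b' hb' j => (hleast j).2 ⟨b', hb', rfl⟩
  rcases hBuch Γ hΓclass h hleast with hhΓ | ⟨P1, P2, _⟩
  · -- singleton case
    left
    have key : ∀ b' ∈ Γ, b' = h := by
      intro b' hb'
      have hRel : ∀ j, (α : ℤ) ∣ (b' j : ℤ) - (h j : ℤ) := by
        intro j
        have h1 := hb'.2 j
        have h2 := hhΓ.2 j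
        have : (b' j : ℤ) - (h j : ℤ) = ((u j : ℤ) - h j) - ((u j : ℤ) - b' j) := by ring
        rw [this]
        exact dvd_sub h2 h1
      set z : Fin d → ℕ := fun j => b' j - h j with hzdef
      have hzdvd : ∀ j, α ∣ z j := by
        intro j
        have hle := hlb b' hb' j
        have : ((z j : ℕ) : ℤ) = (b' j : ℤ) - (h j : ℤ) := by
          simp only [hzdef]
          omega
        have hdz : (α : ℤ) ∣ ((z j : ℕ) : ℤ) := this ▸ hRel j
        exact_mod_cast hdz
      have hzA : z ∈ Amon d α := (mem_Amon_iff hα).2 hzdvd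
      have hb'eq : b' = h + z := by
        funext j
        have := hlb b' hb' j
        simp only [Pi.add_apply, hzdef]
        omega
      by_cases hz0 : z = 0
      · rw [hb'eq, hz0, add_zero]
      · exact absurd hb'eq (hb'.1.2 z hzA hz0 h hhΓ.1.1)
    intro w hw hRw
    rw [key w ⟨hw, hRw⟩, key u huΓ]
  · right
    refine ⟨h, ?_, ?_⟩
    · intro b' hb' hRb'
      exact P1 b' ⟨hb', hRb'⟩
    · intro k
      obtain ⟨b', hb'Γ, hb'eq⟩ := P2 k
      rw [← hb'eq]
      exact ⟨hb'Γ.1, hb'Γ.2⟩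

theorem degE_single {N : ℕ} (v : Fin N) (k : ℕ) : degE (Finsupp.single v k) = k := by
  rw [degE, Finset.sum_eq_single v]
  · simp
  · intro w _ hw; simp [Finsupp.single_apply, Ne.symm hw]
  · intro h; exact absurd (Finset.mem_univ v) h

/-- Main combinatorial lemma: a minimal nonstandard monomial has degree at most `r+1`. -/
theorem minNS_deg (hα : 0 < α) (hdeg : ∀ i, ∑ j, a i j = α)
    (hBgen : B = AddSubmonoid.closure (Set.range a ∪ Set.range (eVec d α)))
    (hmval : ∀ b ∈ B, valE c d α a (m b) = b)
    (hmmin : ∀ b ∈ B, ∀ σ, valE c d α a σ = b → m b = σ ∨ grevlex (m b) σ)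
    {r : ℕ} (hr : IsGreatest {k | ∃ b ∈ BA B α, ∑ j, b j = α * k} r)
    (hBuch : ∀ Γ, IsClass B α Γ → ∀ h : Fin d → ℕ,
      (∀ j, IsLeast {v | ∃ b ∈ Γ, v = b j} (h j)) →
      (h ∈ Γ ∨ ((∀ b ∈ Γ, ∃ k : Fin d, b = fun j => h j + eVec d α k j) ∧
        (∀ k : Fin d, ∃ b ∈ Γ, b = fun j => h j + eVec d α k j) ∧
        ∀ hb ∈ Hilb B, h + hb ∈ B)))
    (n : Fin (c + d) →₀ ℕ)
    (hns : n ≠ m (valE c d α a n))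
    (hmin : ∀ p : Fin (c + d) →₀ ℕ, (∀ v, p v ≤ n v) → p ≠ n → p = m (valE c d α a p)) :
    degE n ≤ r + 1 := by
  classical
  by_cases hY : ∀ j : Fin d, n (Fin.natAdd c j) = 0
  · -- Case I : pure x
    by_contra hbig
    push_neg at hbig
    have hn0 : n ≠ 0 := by
      intro h; rw [h] at hbig; simp [degE] at hbig
    obtain ⟨v, hv⟩ := Finsupp.ne_iff.mp hn0
    simp only [Finsupp.coe_zero, Pi.zero_apply] at hv
    have hsplit := sub_single_add n v hv
    set p : Fin (c + d) →₀ ℕ := n - Finsupp.single v 1 with hpdef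
    have hple : ∀ w, p w ≤ n w := fun w => sub_single_le n v w
    have hdegp : degE n = degE p + 1 := by
      conv_lhs => rw [hsplit]
      rw [degE_add, degE_single]
    have hpne : p ≠ n := by intro h; rw [h] at hdegp; omega
    have hpstd := hmin p hple hpne
    have hpx : ∀ j, p (Fin.natAdd c j) = 0 := fun j => by
      have := hple (Fin.natAdd c j); rw [hY j] at this; omega
    have hBA := pureX_std_BA m hα hdeg hBgen hmval hmmin p hpx hpstd
    have : degE p ≤ r := hr.2 ⟨valE c d α a p, hBA, sum_valE hdeg p⟩
    omega
  · push_neg at hY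
    set J : Finset (Fin d) := Finset.univ.filter (fun j => n (Fin.natAdd c j) ≠ 0) with hJdef
    have hJne : J.Nonempty := by obtain ⟨j, hj⟩ := hY; exact ⟨j, by simp [hJdef, hj]⟩
    set js : Fin d := J.max' hJne with hjsdef
    have hjsmem : n (Fin.natAdd c js) ≠ 0 := by
      have := J.max'_mem hJne; simp only [hJdef, Finset.mem_filter] at this; exact this.2
    have hjsmax : ∀ l, js < l → n (Fin.natAdd c l) = 0 := by
      intro l hl; by_contra hne
      exact absurd (lt_of_le_of_lt (J.le_max' l (by simp [hJdef, hne])) hl) (lt_irrefl l)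
    by_cases hEx : ∃ l, js < l ∧ ∃ w ∈ B, valE c d α a n = w + eVec d α l
    · -- Case II.b
      set μ : Fin (c + d) →₀ ℕ := n.filter (fun v => (v : ℕ) < c) with hμdef
      have hμle : ∀ v, μ v ≤ n v := by
        intro v; rw [hμdef, Finsupp.filter_apply]; split <;> omega
      have hμx : ∀ j, μ (Fin.natAdd c j) = 0 := by
        intro j
        rw [hμdef, Finsupp.filter_apply, if_neg]
        simp only [Fin.coe_natAdd]
        omega
      have hμne : μ ≠ n := by
        intro h; apply hjsmem; rw [← h]; exact hμx js
      have hμstd := hmin μ hμle hμne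
      have huBA := pureX_std_BA m hα hdeg hBgen hmval hmmin μ hμx hμstd
      set u : Fin d → ℕ := valE c d α a μ with hudef
      set ν : Fin (c + d) →₀ ℕ := n.filter (fun v => ¬ (v : ℕ) < c) with hνdef
      have hsplitn : μ + ν = n := Finsupp.filter_pos_add_filter_neg n _
      have hν_y : ∀ j, ν (Fin.natAdd c j) = n (Fin.natAdd c j) := by
        intro j
        rw [hνdef, Finsupp.filter_apply, if_pos]
        simp only [Fin.coe_natAdd]
        omega
      have hν_x : ∀ i : Fin c, ν (Fin.castAdd d i) = 0 := by
        intro i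
        rw [hνdef, Finsupp.filter_apply, if_neg]
        intro hcon
        exact hcon (by simpa using i.isLt)
      have hbν : ∀ j', valE c d α a n j' = u j' + α * n (Fin.natAdd c j') := by
        intro j'
        have h1 : valE c d α a n = u + valE c d α a ν := by
          rw [hudef, ← valE_add, hsplitn]
        have h2 : valE c d α a ν j' = α * n (Fin.natAdd c j') := by
          have hsum : valE c d α a ν j' = ∑ v : Fin (c + d), ν v * gens c d α a v j' := by
            rw [valE, Finset.sum_apply]; rfl
          rw [hsum, Fin.sum_univ_add]
          have hx0 : ∑ i : Fin c, ν (Fin.castAdd d i) * gens c d α a (Fin.castAdd d i) j' = 0 :=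
            Finset.sum_eq_zero fun i _ => by rw [hν_x i, zero_mul]
          rw [hx0, zero_add]
          have hterm : ∀ j : Fin d, ν (Fin.natAdd c j) * gens c d α a (Fin.natAdd c j) j'
              = if j' = j then n (Fin.natAdd c j) * α else 0 := by
            intro j
            rw [gens_natAdd, hν_y j]
            simp [eVec, mul_ite]
          rw [Finset.sum_congr rfl (fun j _ => hterm j),
            Finset.sum_ite_eq Finset.univ j' (fun j => n (Fin.natAdd c j) * α)]
          simp [mul_comm]
        rw [h1, Pi.add_apply, h2]
      have hdegμ : degE μ ≤ r := hr.2 ⟨u, huBA, sum_valE hdeg μ⟩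
      have hdegn : degE n = degE μ + degE ν := by rw [← hsplitn, degE_add]
      by_cases hν2 : degE ν ≤ 1
      · omega
      · exfalso
        push_neg at hν2
        obtain ⟨l, hlgt, w, hwB, hweq⟩ := hEx
        have hνl : n (Fin.natAdd c l) = 0 := hjsmax l hlgt
        have E : ∀ j', w j' + eVec d α l j' = u j' + α * n (Fin.natAdd c j') := by
          intro j'
          have hcf := congrFun hweq j'
          simp only [Pi.add_apply] at hcf
          exact hcf.symm.trans (hbν j')
        obtain ⟨w₀, z, hw₀BA, hzdvd, hwdec⟩ := exists_decomp hα w hwB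
        have hrelw₀ : Rel α u w₀ := by
          intro j'
          have hw : (w j' : ℤ) = (w₀ j' : ℤ) + z j' := by
            have := congrFun hwdec j'; simp only [Pi.add_apply] at this; exact_mod_cast this
          have hE' : (w j' : ℤ) + eVec d α l j' = u j' + (α : ℤ) * n (Fin.natAdd c j') := by
            exact_mod_cast E j'
          have hstep : (u j' : ℤ) - w₀ j'
              = ((eVec d α l j' : ℤ) - (α : ℤ) * n (Fin.natAdd c j')) + z j' := by
            linarith [hw, hE']
          rw [hstep]
          refine dvd_add (dvd_sub ?_ (dvd_mul_right _ _)) ?_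
          · by_cases hj : j' = l <;> simp [eVec, hj]
          · exact_mod_cast hzdvd j'
        rcases class_dichotomy hα hBgen hBuch u huBA with hsing | ⟨h, P1, P2⟩
        · -- singleton class : contradiction
          have hw₀u : w₀ = u := hsing w₀ hw₀BA hrelw₀
          have hEl := E l
          have hevll : eVec d α l l = α := by simp [eVec]
          rw [hevll, hνl, mul_zero, add_zero] at hEl
          have hwl : w l = w₀ l + z l := by
            have := congrFun hwdec l; simpa using this
          rw [hw₀u] at hwl
          omega
        · obtain ⟨k₀, hk₀⟩ := P1 u huBA (fun j' => by simp)
          obtain ⟨k₁, hk₁⟩ := P1 w₀ hw₀BA hrelw₀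
          have hk₀l : k₀ = l := by
            have hEl := E l
            have hevll : eVec d α l l = α := by simp [eVec]
            rw [hevll, hνl, mul_zero, add_zero] at hEl
            have hwl : w l = w₀ l + z l := by
              have := congrFun hwdec l; simpa using this
            have hw₀l : w₀ l = h l + eVec d α k₁ l := congrFun hk₁ l
            have hul : u l = h l + eVec d α k₀ l := congrFun hk₀ l
            by_contra hne
            have hev0 : eVec d α k₀ l = 0 := by
              simp only [eVec, ite_eq_right_iff]
              intro hh; exact absurd hh.symm hne
            omega
          -- build the nonstandard proper divisor p = μ · y_{js}
          set p : Fin (c + d) →₀ ℕ := μ + Finsupp.single (Fin.natAdd c js) 1 with hpdef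
          have hple : ∀ v, p v ≤ n v := by
            intro v
            by_cases hv : v = Fin.natAdd c js
            · subst hv
              simp [hpdef, Finsupp.add_apply, Finsupp.single_apply, hμx js]
              omega
            · simp only [hpdef, Finsupp.add_apply, Finsupp.single_apply,
                if_neg (Ne.symm hv), add_zero]
              exact hμle v
          have hdegp : degE p = degE μ + 1 := by rw [hpdef, degE_add, degE_single]
          have hpne : p ≠ n := by intro hh; rw [hh] at hdegp; omega
          have hpstd := hmin p hple hpne
          have hvalp : valE c d α a p = u + eVec d α js := by
            rw [hpdef, valE_add, valE_y_single]
          set g : Fin d → ℕ := fun j' => h j' + eVec d α js j' with hgdef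
          have hgBA : g ∈ BA B α := (P2 js).1
          have hgB : g ∈ B := hgBA.1
          set τ : Fin (c + d) →₀ ℕ := m g + Finsupp.single (Fin.natAdd c l) 1 with hτdef
          have hτval : valE c d α a τ = valE c d α a p := by
            rw [hτdef, valE_add, valE_y_single, hmval g hgB, hvalp]
            funext j'
            have hugl : u j' = h j' + eVec d α l j' := by
              have := congrFun hk₀ j'; rw [hk₀l] at this; exact this
            simp only [Pi.add_apply, hgdef, hugl]
            omega
          have hmgx : ∀ j', m g (Fin.natAdd c j') = 0 := BA_pure m hα hBgen hmval hgBA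
          have hτl : τ (Fin.natAdd c l) = 1 := by
            simp [hτdef, Finsupp.add_apply, Finsupp.single_apply, hmgx l]
          have hjsnel : Fin.natAdd c js ≠ Fin.natAdd c l := by
            intro hh
            have : (js : ℕ) = (l : ℕ) := by
              have := congrArg (fun x : Fin (c + d) => (x : ℕ)) hh
              simpa [Fin.coe_natAdd] using this
            have : js = l := Fin.ext this
            exact absurd this (ne_of_lt hlgt)
          have hpl : p (Fin.natAdd c l) = 0 := by
            simp [hpdef, Finsupp.add_apply, Finsupp.single_apply, hμx l,
              if_neg hjsnel, ne_of_lt hlgt]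
          have hτdeg : degE τ = degE p := by
            have h1 := sum_valE hdeg τ
            have h2 := sum_valE hdeg p
            rw [hτval] at h1
            exact Nat.eq_of_mul_eq_mul_left hα (h1.symm.trans h2)
          have hglt : grevlex τ p := by
            right
            refine ⟨hτdeg, Fin.natAdd c l, by rw [hpl, hτl]; omega, ?_⟩
            intro v hv
            obtain ⟨l', hl', rfl⟩ := above_natAdd hv
            have hjsnel' : Fin.natAdd c js ≠ Fin.natAdd c l' := by
              intro hh
              have : (js : ℕ) = (l' : ℕ) := by
                have := congrArg (fun x : Fin (c + d) => (x : ℕ)) hh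
                simpa [Fin.coe_natAdd] using this
              have h1 : (js : ℕ) < (l : ℕ) := hlgt
              have h2 : (l : ℕ) < (l' : ℕ) := hl'
              omega
            have hτ0 : τ (Fin.natAdd c l') = 0 := by
              simp [hτdef, Finsupp.add_apply, Finsupp.single_apply, hmgx l',
                if_neg (ne_of_lt hv), ne_of_lt hl']
            have hp0 : p (Fin.natAdd c l') = 0 := by
              simp [hpdef, Finsupp.add_apply, Finsupp.single_apply, hμx l',
                if_neg hjsnel', ne_of_lt (hlgt.trans hl')]
            rw [hτ0, hp0]
          rcases hmmin (valE c d α a p) (valE_mem hBgen p) τ hτval with hh | hh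
          · rw [← hpstd] at hh
            rw [hh, hτl] at hpl
            exact one_ne_zero hpl
          · rw [← hpstd] at hh
            exact grevlex_asymm hh hglt
    · -- Case II.a : n would be standard, contradiction
      push_neg at hEx
      exfalso
      have hsplit := sub_single_add n (Fin.natAdd c js) hjsmem
      set n' : Fin (c + d) →₀ ℕ := n - Finsupp.single (Fin.natAdd c js) 1 with hn'def
      have hn'le : ∀ v, n' v ≤ n v := fun v => sub_single_le n (Fin.natAdd c js) v
      have hdegn' : degE n = degE n' + 1 := by
        conv_lhs => rw [hsplit]
        rw [degE_add, degE_single]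
      have hn'ne : n' ≠ n := by intro hh; rw [hh] at hdegn'; omega
      have hstd' := hmin n' hn'le hn'ne
      have hy' : ∀ l, js < l → n' (Fin.natAdd c l) = 0 := by
        intro l hl
        have := hn'le (Fin.natAdd c l)
        rw [hjsmax l hl] at this
        omega
      have hno : ∀ l, js < l → ∀ w ∈ B,
          valE c d α a (n' + Finsupp.single (Fin.natAdd c js) 1) ≠ w + eVec d α l := by
        intro l hl w hw
        rw [← hsplit]
        exact hEx l hl w hw
      have hfin := lemB m hα hdeg hBgen hmval hmmin n' hstd' js hy' hno
      rw [← hsplit] at hfin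
      exact hns hfin.symm

end WithM

section Algebra

variable (m : (Fin d → ℕ) → (Fin (c + d) →₀ ℕ))
variable {K : Type*} [Field K]
variable (π : MvPolynomial (Fin (c + d)) K →ₐ[K] AddMonoidAlgebra K (Fin d → ℕ))

theorem pi_monomial_one
    (hπ : ∀ v, π (MvPolynomial.X v) = AddMonoidAlgebra.of' K (Fin d → ℕ) (gens c d α a v))
    (σ : Fin (c + d) →₀ ℕ) :
    π (MvPolynomial.monomial σ (1 : K))
      = AddMonoidAlgebra.single (valE c d α a σ) (1 : K) := by
  induction σ using Finsupp.induction with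
  | zero =>
    have h1 : (MvPolynomial.monomial (0 : Fin (c + d) →₀ ℕ)) (1 : K) = 1 := by
      simp
    rw [h1, map_one, valE_zero, AddMonoidAlgebra.one_def]
  | single_add v e f hv he IH =>
    rw [MvPolynomial.monomial_single_add, map_mul, map_pow, hπ v, IH]
    have hof : AddMonoidAlgebra.of' K (Fin d → ℕ) (gens c d α a v)
        = AddMonoidAlgebra.single (gens c d α a v) (1 : K) := rfl
    rw [hof, AddMonoidAlgebra.single_pow, one_pow, AddMonoidAlgebra.single_mul_single,
      one_mul, valE_add, valE_single]

theorem pi_monomial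
    (hπ : ∀ v, π (MvPolynomial.X v) = AddMonoidAlgebra.of' K (Fin d → ℕ) (gens c d α a v))
    (σ : Fin (c + d) →₀ ℕ) (k : K) :
    π (MvPolynomial.monomial σ k)
      = AddMonoidAlgebra.single (valE c d α a σ) k := by
  have h1 : (MvPolynomial.monomial σ) k = k • (MvPolynomial.monomial σ) (1 : K) := by
    rw [MvPolynomial.smul_monomial, smul_eq_mul, mul_one]
  rw [h1, map_smul, pi_monomial_one π hπ, AddMonoidAlgebra.smul_single, smul_eq_mul, mul_one]

/-- Step 1: every nonstandard monomial lies in the initial ideal. -/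
theorem mono_mem_init
    (hBgen : B = AddSubmonoid.closure (Set.range a ∪ Set.range (eVec d α)))
    (hmval : ∀ b ∈ B, valE c d α a (m b) = b)
    (hmmin : ∀ b ∈ B, ∀ σ, valE c d α a σ = b → m b = σ ∨ grevlex (m b) σ)
    (hπ : ∀ v, π (MvPolynomial.X v) = AddMonoidAlgebra.of' K (Fin d → ℕ) (gens c d α a v))
    (σ : Fin (c + d) →₀ ℕ) (hns : σ ≠ m (valE c d α a σ)) :
    (MvPolynomial.monomial σ) (1 : K) ∈ initialIdeal (RingHom.ker π.toRingHom) := by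
  classical
  set b : Fin d → ℕ := valE c d α a σ with hbdef
  set f : MvPolynomial (Fin (c + d)) K :=
    (MvPolynomial.monomial σ) (1 : K) - (MvPolynomial.monomial (m b)) (1 : K) with hfdef
  have hfk : f ∈ RingHom.ker π.toRingHom := by
    rw [RingHom.mem_ker]
    have : π f = 0 := by
      rw [hfdef, map_sub, pi_monomial π hπ, pi_monomial π hπ, hmval b (valE_mem hBgen σ)]
      exact sub_self _
    exact this
  have hcoeff : ∀ τ, MvPolynomial.coeff τ f
      = (if σ = τ then (1 : K) else 0) - (if m b = τ then (1 : K) else 0) := by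
    intro τ
    rw [hfdef, MvPolynomial.coeff_sub, MvPolynomial.coeff_monomial,
      MvPolynomial.coeff_monomial]
  have hlead : IsLeadMon f σ := by
    constructor
    · rw [MvPolynomial.mem_support_iff, hcoeff σ, if_pos rfl, if_neg (Ne.symm hns)]
      simp
    · intro τ hτ
      rw [MvPolynomial.mem_support_iff, hcoeff τ] at hτ
      by_cases h1 : σ = τ
      · exact Or.inl h1.symm
      · right
        rw [if_neg h1] at hτ
        by_cases h2 : m b = τ
        · rw [← h2]
          rcases hmmin b (valE_mem hBgen σ) σ rfl with hh | hh
          · exact absurd hh.symm hns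
          · exact hh
        · rw [if_neg h2] at hτ; simp at hτ
  exact Ideal.subset_span ⟨f, hfk, σ, hlead, rfl⟩

/-- Step 2: the lead monomial of an element of the kernel is nonstandard. -/
theorem lead_nonstd
    (hBgen : B = AddSubmonoid.closure (Set.range a ∪ Set.range (eVec d α)))
    (hmval : ∀ b ∈ B, valE c d α a (m b) = b)
    (hmmin : ∀ b ∈ B, ∀ σ, valE c d α a σ = b → m b = σ ∨ grevlex (m b) σ)
    (hπ : ∀ v, π (MvPolynomial.X v) = AddMonoidAlgebra.of' K (Fin d → ℕ) (gens c d α a v))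
    (f : MvPolynomial (Fin (c + d)) K) (hf : f ∈ RingHom.ker π.toRingHom)
    (σ : Fin (c + d) →₀ ℕ) (hσ : IsLeadMon f σ) :
    σ ≠ m (valE c d α a σ) := by
  classical
  intro hstd
  set b : Fin d → ℕ := valE c d α a σ with hbdef
  have hπf : π f = 0 := hf
  have hsum : ∑ τ ∈ f.support,
      (if valE c d α a τ = b then MvPolynomial.coeff τ f else 0) = 0 := by
    have h1 : π f = ∑ τ ∈ f.support,
        AddMonoidAlgebra.single (valE c d α a τ) (MvPolynomial.coeff τ f) := by
      conv_lhs => rw [← MvPolynomial.support_sum_monomial_coeff f]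
      rw [map_sum]
      exact Finset.sum_congr rfl fun τ _ => pi_monomial π hπ τ _
    have h3 := congrArg ((Finsupp.applyAddHom (M := K) b).comp AddMonoidAlgebra.coeffAddEquiv.toAddMonoidHom) (h1.symm.trans hπf)
    rw [map_sum, map_zero] at h3
    refine Eq.trans ?_ h3
    refine Finset.sum_congr rfl fun τ _ => ?_
    simp [Finsupp.applyAddHom, Finsupp.single_apply, AddMonoidAlgebra.coeff_single]
  have honly : ∀ τ ∈ f.support, τ ≠ σ → ¬(valE c d α a τ = b) := by
    intro τ hτ hne hval
    rcases hσ.2 τ hτ with h | h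
    · exact hne h
    · rcases hmmin b (valE_mem hBgen σ) τ hval with hh | hh
      · rw [← hstd] at hh; exact hne hh.symm
      · rw [← hstd] at hh
        exact grevlex_asymm h hh
  have hsum2 : ∑ τ ∈ f.support,
      (if valE c d α a τ = b then MvPolynomial.coeff τ f else 0)
      = MvPolynomial.coeff σ f := by
    rw [Finset.sum_eq_single σ]
    · rw [if_pos rfl]
    · intro τ hτ hne
      rw [if_neg (honly τ hτ hne)]
    · intro hns
      exact absurd hσ.1 hns
  rw [hsum2] at hsum
  exact (MvPolynomial.mem_support_iff.1 hσ.1) hsum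

end Algebra

theorem sub_add_of_le {N : ℕ} (σ q : Fin N →₀ ℕ) (h : ∀ v, q v ≤ σ v) :
    (σ - q) + q = σ := by
  ext v
  simp only [Finsupp.add_apply, Finsupp.coe_tsub, Pi.sub_apply]
  have := h v
  omega

theorem degE_lt {N : ℕ} {q σ : Fin N →₀ ℕ} (h : ∀ v, q v ≤ σ v) (hne : q ≠ σ) :
    degE q < degE σ := by
  obtain ⟨v, hv⟩ := Finsupp.ne_iff.mp hne
  exact Finset.sum_lt_sum (fun i _ => h i)
    ⟨v, Finset.mem_univ v, lt_of_le_of_ne (h v) hv⟩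

theorem exists_min_div (m : (Fin d → ℕ) → (Fin (c + d) →₀ ℕ)) (σ : Fin (c + d) →₀ ℕ)
    (hσ : σ ≠ m (valE c d α a σ)) :
    ∃ p ρ : Fin (c + d) →₀ ℕ,
      (p ≠ m (valE c d α a p) ∧
        ∀ q, (∀ v, q v ≤ p v) → q ≠ p → q = m (valE c d α a q)) ∧ σ = ρ + p := by
  classical
  suffices H : ∀ N (σ : Fin (c + d) →₀ ℕ), degE σ ≤ N → σ ≠ m (valE c d α a σ) →
      ∃ p ρ : Fin (c + d) →₀ ℕ,
        (p ≠ m (valE c d α a p) ∧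
          ∀ q, (∀ v, q v ≤ p v) → q ≠ p → q = m (valE c d α a q)) ∧ σ = ρ + p from
    H (degE σ) σ le_rfl hσ
  intro N
  induction N with
  | zero =>
    intro σ hdn hns
    by_cases hmem : ∀ q, (∀ v, q v ≤ σ v) → q ≠ σ → q = m (valE c d α a q)
    · exact ⟨σ, 0, ⟨hns, hmem⟩, (zero_add σ).symm⟩
    · push_neg at hmem
      obtain ⟨q, hqle, hqne, _⟩ := hmem
      have := degE_lt hqle hqne
      omega
  | succ N IH =>
    intro σ hdn hns
    by_cases hmem : ∀ q, (∀ v, q v ≤ σ v) → q ≠ σ → q = m (valE c d α a q)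
    · exact ⟨σ, 0, ⟨hns, hmem⟩, (zero_add σ).symm⟩
    · push_neg at hmem
      obtain ⟨q, hqle, hqne, hqns⟩ := hmem
      have hlt := degE_lt hqle hqne
      obtain ⟨p, ρ', hp, hq⟩ := IH q (by omega) hqns
      refine ⟨p, (σ - q) + ρ', hp, ?_⟩
      rw [add_assoc, ← hq, sub_add_of_le σ q hqle]

end SimplicialToric


open SimplicialToric

/-- If `K[B]` is Buchsbaum (expressed via the combinatorial
characterization of [BEN, Prop. 3.1(4)]: each ideal in the decomposition is `T` or the
maximal homogeneous ideal `T₊` with `hᵢ + b ∈ B` for all `b ∈ Hilb(B)`), then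
`in_≺(ker π)` is generated in degrees `≤ r(K[B]) + 1`. -/
theorem degree_bound_of_buchsbaum
    (c d α : ℕ) (hα : 0 < α)
    (a : Fin c → Fin d → ℕ) (B : AddSubmonoid (Fin d → ℕ))
    (hBgen : B = AddSubmonoid.closure (Set.range a ∪ Set.range (eVec d α)))
    (hhilb : Hilb B = Set.range a ∪ Set.range (eVec d α))
    (hdeg : ∀ i, ∑ j, a i j = α)
    (m : (Fin d → ℕ) → (Fin (c + d) →₀ ℕ))
    (hmval : ∀ b ∈ B, valE c d α a (m b) = b)
    (hmmin : ∀ b ∈ B, ∀ σ, valE c d α a σ = b → m b = σ ∨ grevlex (m b) σ)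
    (K : Type*) [Field K]
    (π : MvPolynomial (Fin (c + d)) K →ₐ[K] AddMonoidAlgebra K (Fin d → ℕ))
    (hπ : ∀ v, π (MvPolynomial.X v) = AddMonoidAlgebra.of' K (Fin d → ℕ) (gens c d α a v))
    (r : ℕ) (hr : IsGreatest {k | ∃ b ∈ BA B α, ∑ j, b j = α * k} r)
    (hBuch : ∀ Γ, IsClass B α Γ → ∀ h : Fin d → ℕ,
      (∀ j, IsLeast {v | ∃ b ∈ Γ, v = b j} (h j)) →
      (h ∈ Γ ∨ ((∀ b ∈ Γ, ∃ k : Fin d, b = fun j => h j + eVec d α k j) ∧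
        (∀ k : Fin d, ∃ b ∈ Γ, b = fun j => h j + eVec d α k j) ∧
        ∀ hb ∈ Hilb B, h + hb ∈ B))) :
    ∃ Ns : Set (Fin (c + d) →₀ ℕ), (∀ n ∈ Ns, degE n ≤ r + 1) ∧
      initialIdeal (RingHom.ker π.toRingHom)
        = Ideal.span ((fun n => MvPolynomial.monomial n (1 : K)) '' Ns) := by
  classical
  refine ⟨{n | n ≠ m (valE c d α a n) ∧
    ∀ p, (∀ v, p v ≤ n v) → p ≠ n → p = m (valE c d α a p)}, ?_, ?_⟩
  · intro n hn
    exact minNS_deg m hα hdeg hBgen hmval hmmin hr hBuch n hn.1 hn.2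
  · apply le_antisymm
    · rw [initialIdeal]
      refine Ideal.span_le.2 ?_
      rintro g ⟨f, hf, σ, hlead, rfl⟩
      have hns := lead_nonstd m π hBgen hmval hmmin hπ f hf σ hlead
      obtain ⟨p, ρ, hp, hdecomp⟩ := exists_min_div m σ hns
      have hmul : (MvPolynomial.monomial σ) (1 : K)
          = (MvPolynomial.monomial ρ) (1 : K) * (MvPolynomial.monomial p) (1 : K) := by
        rw [MvPolynomial.monomial_mul, one_mul, ← hdecomp]
      rw [hmul]
      exact Ideal.mul_mem_left _ _
        (Ideal.subset_span (Set.mem_image_of_mem _ hp))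
    · refine Ideal.span_le.2 ?_
      rintro g ⟨p, hp, rfl⟩
      exact mono_mem_init m π hBgen hmval hmmin hπ p hp.1
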